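/- arXiv:2506.11741 — 2 statements merged into one kernel-verified Lean document; each statement's English description precedes it below -/
import Mathlib

section
/- For any density matrix ρ on ℂ^d with orthonormal eigendecomposition (ψ_i, λ_i), and any Hermitian matrix H on ℂ^d with largest eigenvalue λmax(H) and smallest eigenvalue λmin(H), the quantum Fisher information satisfies F_Q(ρ, H) ≤ (λmax(H) − λmin(H))². (This establishes the paper's normalization claim that the coherence-task fidelity q₃ = F_Q(ρ, H)/F_Q^max(d), with F_Q^max(d) = (λmax(H) − λmin(H))², lies in [0,1] for all finite-dimensional states.) -/
open Matrix BigOperators ComplexOrder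

/-- Quantum Fisher information computed from an orthonormal eigendecomposition
`(ψ i, lam i)` of a density matrix, with respect to the Hermitian matrix `H`. -/
noncomputable def QFI {d : ℕ} (ψ : Fin d → Fin d → ℂ) (lam : Fin d → ℝ)
    (H : Matrix (Fin d) (Fin d) ℂ) : ℝ :=
  2 * ∑ i : Fin d, ∑ j : Fin d,
    if 0 < lam i + lam j then
      ((lam i - lam j) ^ 2 / (lam i + lam j)) * ‖star (ψ i) ⬝ᵥ H *ᵥ ψ j‖ ^ 2
    else 0

-- auxiliary PSD bound
lemma aux_psd {d : ℕ} (H : Matrix (Fin d) (Fin d) ℂ) (hH : H.IsHermitian)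
    (c r : ℝ) (hb : ∀ i, |hH.eigenvalues i - c| ≤ r) :
    (((r ^ 2 : ℝ) : ℂ) • (1 : Matrix (Fin d) (Fin d) ℂ)
      - (H - ((c : ℝ) : ℂ) • 1) * (H - ((c : ℝ) : ℂ) • 1)).PosSemidef := by
  classical
  set U : Matrix (Fin d) (Fin d) ℂ := (hH.eigenvectorUnitary : Matrix (Fin d) (Fin d) ℂ) with hUdef
  have hU1 : U * Uᴴ = 1 := by
    have := hH.eigenvectorUnitary.2
    rw [Unitary.mem_iff] at this
    simpa [Matrix.star_eq_conjTranspose] using this.2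
  have hU2 : Uᴴ * U = 1 := mul_eq_one_comm.mp hU1
  have hs : H = U * diagonal (fun i => ((hH.eigenvalues i : ℝ) : ℂ)) * Uᴴ := by
    have hs0 := hH.spectral_theorem
    rw [Unitary.conjStarAlgAut_apply, ← hUdef, Matrix.star_eq_conjTranspose] at hs0
    exact hs0
  have hD : H - ((c : ℝ) : ℂ) • 1 =
      U * diagonal (fun i => ((hH.eigenvalues i - c : ℝ) : ℂ)) * Uᴴ := by
    have h1 : ((c : ℝ) : ℂ) • (1 : Matrix (Fin d) (Fin d) ℂ)
        = U * (((c : ℝ) : ℂ) • 1) * Uᴴ := by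
      rw [Matrix.mul_smul, Matrix.smul_mul, mul_one, hU1]
    have hdiag : diagonal (fun i => ((hH.eigenvalues i - c : ℝ) : ℂ))
        = diagonal (fun i => ((hH.eigenvalues i : ℝ) : ℂ)) - ((c : ℝ) : ℂ) • 1 := by
      ext i j
      rcases eq_or_ne i j with h | h
      · subst h
        simp only [Matrix.diagonal_apply_eq, Matrix.sub_apply, Matrix.smul_apply,
          Matrix.one_apply_eq, smul_eq_mul, mul_one]
        push_cast; ring
      · simp [Matrix.diagonal_apply_ne _ h, Matrix.one_apply_ne h]
    rw [hdiag, Matrix.mul_sub, Matrix.sub_mul, ← hs, ← h1]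
  have hsq : (H - ((c : ℝ) : ℂ) • 1) * (H - ((c : ℝ) : ℂ) • 1)
      = U * diagonal (fun i => (((hH.eigenvalues i - c) ^ 2 : ℝ) : ℂ)) * Uᴴ := by
    rw [hD]
    have e : (fun i => (((hH.eigenvalues i - c) ^ 2 : ℝ) : ℂ))
        = fun i => ((hH.eigenvalues i - c : ℝ) : ℂ) * ((hH.eigenvalues i - c : ℝ) : ℂ) := by
      funext i; push_cast; ring
    rw [e, ← Matrix.diagonal_mul_diagonal]
    calc (U * diagonal (fun i => ((hH.eigenvalues i - c : ℝ) : ℂ))) * Uᴴ *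
          ((U * diagonal (fun i => ((hH.eigenvalues i - c : ℝ) : ℂ))) * Uᴴ)
        = U * (diagonal (fun i => ((hH.eigenvalues i - c : ℝ) : ℂ)) * ((Uᴴ * U) *
            diagonal (fun i => ((hH.eigenvalues i - c : ℝ) : ℂ)))) * Uᴴ := by
          simp only [Matrix.mul_assoc]
      _ = U * (diagonal (fun i => ((hH.eigenvalues i - c : ℝ) : ℂ)) *
            diagonal (fun i => ((hH.eigenvalues i - c : ℝ) : ℂ))) * Uᴴ := by
          rw [hU2, one_mul]
  have hid : ((r ^ 2 : ℝ) : ℂ) • (1 : Matrix (Fin d) (Fin d) ℂ)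
      - (H - ((c : ℝ) : ℂ) • 1) * (H - ((c : ℝ) : ℂ) • 1)
      = U * diagonal (fun i => (((r ^ 2 - (hH.eigenvalues i - c) ^ 2 : ℝ)) : ℂ)) * Uᴴ := by
    rw [hsq]
    have h1 : ((r ^ 2 : ℝ) : ℂ) • (1 : Matrix (Fin d) (Fin d) ℂ)
        = U * (((r ^ 2 : ℝ) : ℂ) • 1) * Uᴴ := by
      rw [Matrix.mul_smul, Matrix.smul_mul, mul_one, hU1]
    have hdiag : diagonal (fun i => (((r ^ 2 - (hH.eigenvalues i - c) ^ 2 : ℝ)) : ℂ))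
        = ((r ^ 2 : ℝ) : ℂ) • (1 : Matrix (Fin d) (Fin d) ℂ)
          - diagonal (fun i => (((hH.eigenvalues i - c) ^ 2 : ℝ) : ℂ)) := by
      ext i j
      rcases eq_or_ne i j with h | h
      · subst h
        simp only [Matrix.diagonal_apply_eq, Matrix.sub_apply, Matrix.smul_apply,
          Matrix.one_apply_eq, smul_eq_mul, mul_one]
        push_cast; ring
      · simp [Matrix.diagonal_apply_ne _ h, Matrix.one_apply_ne h]
    rw [h1, ← Matrix.sub_mul, ← Matrix.mul_sub, ← hdiag]
  rw [hid]
  refine Matrix.PosSemidef.mul_mul_conjTranspose_same ?_ U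
  refine Matrix.posSemidef_diagonal_iff.mpr fun i => ?_
  rw [Complex.zero_le_real]
  have := hb i
  nlinarith [abs_nonneg (hH.eigenvalues i - c), sq_abs (hH.eigenvalues i - c),
    le_abs_self (hH.eigenvalues i - c)]

/-- The quantum Fisher information of any density matrix with respect to a Hermitian
observable `H` is bounded by the squared spectral width `(λmax(H) − λmin(H))²`. -/
theorem QFI_le_spectral_width_sq {d : ℕ}
    (ρ : Matrix (Fin d) (Fin d) ℂ)
    (hherm : ρ.IsHermitian) (hpos : ρ.PosSemidef) (htr : ρ.trace = 1)
    (ψb : Fin d → Fin d → ℂ) (lam : Fin d → ℝ)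
    (horth : ∀ i j, star (ψb i) ⬝ᵥ ψb j = if i = j then 1 else 0)
    (heig : ∀ i, ρ *ᵥ ψb i = (lam i : ℂ) • ψb i)
    (hnn : ∀ i, 0 ≤ lam i)
    (H : Matrix (Fin d) (Fin d) ℂ) (hH : H.IsHermitian)
    (lmax lmin : ℝ)
    (hmax_mem : ∃ i, hH.eigenvalues i = lmax) (hmax : ∀ i, hH.eigenvalues i ≤ lmax)
    (hmin_mem : ∃ i, hH.eigenvalues i = lmin) (hmin : ∀ i, lmin ≤ hH.eigenvalues i) :
    QFI ψb lam H ≤ (lmax - lmin) ^ 2 := by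
  classical
  obtain ⟨i0, hi0⟩ := hmax_mem
  have hml : lmin ≤ lmax := hi0 ▸ hmin i0
  set c : ℝ := (lmax + lmin) / 2 with hc
  set r : ℝ := (lmax - lmin) / 2 with hr
  have hr0 : 0 ≤ r := by simp [hr]; linarith
  set H' : Matrix (Fin d) (Fin d) ℂ := H - ((c : ℝ) : ℂ) • 1 with hH'def
  have hH'herm : H'.IsHermitian := by
    apply Matrix.IsHermitian.sub hH
    rw [Matrix.IsHermitian, Matrix.conjTranspose_smul, Matrix.conjTranspose_one]
    norm_num
  set A : Fin d → Fin d → ℂ := fun i j => star (ψb i) ⬝ᵥ H' *ᵥ ψb j with hAdef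
  -- Hermitian symmetry of A
  have hAsym : ∀ i j, star (A i j) = A j i := by
    intro i j
    show star (star (ψb i) ⬝ᵥ H' *ᵥ ψb j) = star (ψb j) ⬝ᵥ H' *ᵥ ψb i
    rw [Matrix.star_dotProduct, star_star, Matrix.star_mulVec, hH'herm.eq,
      ← Matrix.dotProduct_mulVec]
  have hAnorm : ∀ i j, ‖A i j‖ = ‖A j i‖ := by
    intro i j; rw [← hAsym i j, norm_star]
  -- QFI with H equals using A off-diagonal
  have hAoff : ∀ i j, i ≠ j → star (ψb i) ⬝ᵥ H *ᵥ ψb j = A i j := by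
    intro i j hij
    rw [hAdef]
    simp only [hH'def]
    rw [Matrix.sub_mulVec, dotProduct_sub, Matrix.smul_mulVec,
      Matrix.one_mulVec, dotProduct_smul, horth i j, if_neg hij]
    simp
  -- termwise bound
  have key : ∀ i j,
      (if 0 < lam i + lam j then
        ((lam i - lam j) ^ 2 / (lam i + lam j)) * ‖star (ψb i) ⬝ᵥ H *ᵥ ψb j‖ ^ 2
      else 0) ≤ (lam i + lam j) * ‖A i j‖ ^ 2 := by
    intro i j
    have hsum : 0 ≤ lam i + lam j := by linarith [hnn i, hnn j]
    rcases eq_or_ne i j with h | h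
    · subst h
      split_ifs with hp
      · simp only [sub_self]
        rw [zero_pow (by norm_num), zero_div, zero_mul]
        positivity
      · positivity
    · rw [hAoff i j h]
      split_ifs with hp
      · apply mul_le_mul_of_nonneg_right _ (by positivity)
        rw [div_le_iff₀ hp]
        nlinarith [hnn i, hnn j]
      · positivity
  have step1 : QFI ψb lam H ≤ 2 * ∑ i, ∑ j, (lam i + lam j) * ‖A i j‖ ^ 2 := by
    rw [QFI]
    apply mul_le_mul_of_nonneg_left _ (by norm_num)
    exact Finset.sum_le_sum fun i _ => Finset.sum_le_sum fun j _ => key i j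
  -- symmetrize
  have step2 : ∑ i, ∑ j, (lam i + lam j) * ‖A i j‖ ^ 2
      = 2 * ∑ i, lam i * ∑ j, ‖A i j‖ ^ 2 := by
    have e1 : ∑ i, ∑ j, (lam i + lam j) * ‖A i j‖ ^ 2
        = (∑ i, ∑ j, lam i * ‖A i j‖ ^ 2) + ∑ i, ∑ j, lam j * ‖A i j‖ ^ 2 := by
      rw [← Finset.sum_add_distrib]
      congr 1; funext i
      rw [← Finset.sum_add_distrib]
      congr 1; funext j
      ring
    have e2 : ∑ i, ∑ j, lam j * ‖A i j‖ ^ 2 = ∑ i, ∑ j, lam i * ‖A i j‖ ^ 2 := by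
      rw [Finset.sum_comm]
      congr 1; funext i
      congr 1; funext j
      rw [hAnorm i j]
    rw [e1, e2]
    rw [Finset.mul_sum]
    rw [← Finset.sum_add_distrib]
    congr 1; funext i
    rw [Finset.mul_sum, Finset.mul_sum, ← Finset.sum_add_distrib]
    congr 1; funext j
    ring
  -- the column matrix V
  set V : Matrix (Fin d) (Fin d) ℂ := Matrix.of (fun k j => ψb j k) with hVdef
  have hVV : Vᴴ * V = 1 := by
    ext i j
    have h := horth i j
    simp only [dotProduct, Pi.star_apply, Complex.star_def] at h
    simp [Matrix.mul_apply, Matrix.conjTranspose_apply, Matrix.one_apply, hVdef, h]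
  have hVV2 : V * Vᴴ = 1 := mul_eq_one_comm.mp hVV
  have hz : ∀ z : ℂ, ((‖z‖ ^ 2 : ℝ) : ℂ) = star z * z := fun z => by
    rw [Complex.star_def, mul_comm, Complex.mul_conj, Complex.normSq_eq_norm_sq]
  -- Parseval
  have hpar : ∀ v : Fin d → ℂ,
      ((∑ j, ‖star (ψb j) ⬝ᵥ v‖ ^ 2 : ℝ) : ℂ) = star v ⬝ᵥ v := by
    intro v
    have hcoord : ∀ j, (Vᴴ *ᵥ v) j = star (ψb j) ⬝ᵥ v := by
      intro j
      simp [Matrix.mulVec, dotProduct, Matrix.conjTranspose_apply, hVdef]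
    have h1 : star (Vᴴ *ᵥ v) ⬝ᵥ (Vᴴ *ᵥ v) = star v ⬝ᵥ v := by
      rw [Matrix.star_mulVec, Matrix.conjTranspose_conjTranspose,
        Matrix.dotProduct_mulVec, Matrix.vecMul_vecMul, hVV2, Matrix.vecMul_one]
    calc ((∑ j, ‖star (ψb j) ⬝ᵥ v‖ ^ 2 : ℝ) : ℂ)
        = ∑ j, ((‖star (ψb j) ⬝ᵥ v‖ ^ 2 : ℝ) : ℂ) := by push_cast; rfl
      _ = ∑ j, star ((Vᴴ *ᵥ v) j) * (Vᴴ *ᵥ v) j := by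
          refine Finset.sum_congr rfl fun j _ => ?_
          rw [hz, hcoord j]
      _ = star (Vᴴ *ᵥ v) ⬝ᵥ (Vᴴ *ᵥ v) := by
          simp [dotProduct, Pi.star_apply]
      _ = star v ⬝ᵥ v := h1
  -- eigenvalue window for aux_psd
  have hb : ∀ i, |hH.eigenvalues i - c| ≤ r := by
    intro i
    rw [abs_le]
    constructor
    · have := hmin i; rw [hr, hc]; linarith
    · have := hmax i; rw [hr, hc]; linarith
  have hpsd := aux_psd H hH c r hb
  -- bound on the row sums
  have hSi : ∀ i, ∑ j, ‖A i j‖ ^ 2 ≤ r ^ 2 := by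
    intro i
    have hs1 : ∑ j, ‖A i j‖ ^ 2 = ∑ j, ‖star (ψb j) ⬝ᵥ (H' *ᵥ ψb i)‖ ^ 2 :=
      Finset.sum_congr rfl fun j _ => by rw [hAnorm i j]
    have hs2 : ((∑ j, ‖A i j‖ ^ 2 : ℝ) : ℂ) = star (ψb i) ⬝ᵥ (H' * H') *ᵥ ψb i := by
      rw [hs1, hpar (H' *ᵥ ψb i), Matrix.star_mulVec, hH'herm.eq,
        Matrix.dotProduct_mulVec, Matrix.vecMul_vecMul, ← Matrix.dotProduct_mulVec]
    have h0 := hpsd.dotProduct_mulVec_nonneg (ψb i)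
    rw [Matrix.sub_mulVec, dotProduct_sub, Matrix.smul_mulVec,
      Matrix.one_mulVec, dotProduct_smul, horth i i, if_pos rfl, ← hs2] at h0
    rw [smul_eq_mul, mul_one] at h0
    have h0' : (0 : ℂ) ≤ (((r ^ 2 - ∑ j, ‖A i j‖ ^ 2 : ℝ)) : ℂ) := by
      rw [Complex.ofReal_sub]; exact h0
    rw [Complex.zero_le_real] at h0'
    linarith
  -- trace gives sum of eigenvalues = 1
  have hlam1 : ∑ i, lam i = 1 := by
    have hdiagi : ∀ i, (Vᴴ * ρ * V) i i = ((lam i : ℝ) : ℂ) := by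
      intro i
      rw [Matrix.mul_assoc]
      have hrV : (ρ * V) = Matrix.of (fun k j => (ρ *ᵥ ψb j) k) := by
        ext k j
        simp [Matrix.mul_apply, Matrix.mulVec, dotProduct, hVdef]
      rw [hrV]
      have : (Vᴴ * Matrix.of fun k j => (ρ *ᵥ ψb j) k) i i
          = star (ψb i) ⬝ᵥ (ρ *ᵥ ψb i) := by
        simp [Matrix.mul_apply, Matrix.conjTranspose_apply, dotProduct, hVdef]
      rw [this, heig i, dotProduct_smul, horth i i, if_pos rfl, smul_eq_mul, mul_one]
    have htr2 : (Vᴴ * ρ * V).trace = ρ.trace := by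
      rw [Matrix.trace_mul_cycle, hVV2, one_mul]
    have htr3 : ((∑ i, lam i : ℝ) : ℂ) = 1 := by
      rw [← htr, ← htr2, Matrix.trace]
      push_cast
      exact Finset.sum_congr rfl fun i _ => (hdiagi i).symm
    exact_mod_cast htr3
  -- assemble
  have hfin : ∑ i, lam i * ∑ j, ‖A i j‖ ^ 2 ≤ r ^ 2 := by
    calc ∑ i, lam i * ∑ j, ‖A i j‖ ^ 2
        ≤ ∑ i, lam i * r ^ 2 :=
          Finset.sum_le_sum fun i _ => mul_le_mul_of_nonneg_left (hSi i) (hnn i)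
      _ = (∑ i, lam i) * r ^ 2 := by rw [← Finset.sum_mul]
      _ = r ^ 2 := by rw [hlam1, one_mul]
  have hfinal : (lmax - lmin) ^ 2 = 4 * r ^ 2 := by rw [hr]; ring
  rw [step2] at step1
  rw [hfinal]
  linarith
end

section
/- Let ψ ∈ ℂ^{dA} ⊗ ℂ^{dB} ⊗ ℂ^{dC} be a unit vector and ρ = ψψ⋆ the associated pure tripartite density matrix (indexed by Fin dA × Fin dB × Fin dC). Let ρ_A, ρ_B, ρ_C, ρ_{AB}, ρ_{AC} denote the reduced density matrices obtained by partial traces, and define the quantum mutual information I(A:B) = S(ρ_A) + S(ρ_B) − S(ρ_{AB}) and I(A:C) = S(ρ_A) + S(ρ_C) − S(ρ_{AC}). Then I(A:B) + I(A:C) ≤ 2·S(ρ_A). (This is the entropic monogamy bound invoked in the entropic consistency step of the proof of Theorem 1.) -/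
open Matrix BigOperators

variable {dA dB dC : ℕ}

/-- Reduced state on `A` of a tripartite matrix. -/
noncomputable def redA (ρ : Matrix (Fin dA × Fin dB × Fin dC) (Fin dA × Fin dB × Fin dC) ℂ) :
    Matrix (Fin dA) (Fin dA) ℂ :=
  fun a a' => ∑ b : Fin dB, ∑ c : Fin dC, ρ (a, b, c) (a', b, c)

/-- Reduced state on `B` of a tripartite matrix. -/
noncomputable def redB (ρ : Matrix (Fin dA × Fin dB × Fin dC) (Fin dA × Fin dB × Fin dC) ℂ) :
    Matrix (Fin dB) (Fin dB) ℂ :=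
  fun b b' => ∑ a : Fin dA, ∑ c : Fin dC, ρ (a, b, c) (a, b', c)

/-- Reduced state on `C` of a tripartite matrix. -/
noncomputable def redC (ρ : Matrix (Fin dA × Fin dB × Fin dC) (Fin dA × Fin dB × Fin dC) ℂ) :
    Matrix (Fin dC) (Fin dC) ℂ :=
  fun c c' => ∑ a : Fin dA, ∑ b : Fin dB, ρ (a, b, c) (a, b, c')

/-- Reduced state on `AB` of a tripartite matrix. -/
noncomputable def redAB (ρ : Matrix (Fin dA × Fin dB × Fin dC) (Fin dA × Fin dB × Fin dC) ℂ) :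
    Matrix (Fin dA × Fin dB) (Fin dA × Fin dB) ℂ :=
  fun p q => ∑ c : Fin dC, ρ (p.1, p.2, c) (q.1, q.2, c)

/-- Reduced state on `AC` of a tripartite matrix. -/
noncomputable def redAC (ρ : Matrix (Fin dA × Fin dB × Fin dC) (Fin dA × Fin dB × Fin dC) ℂ) :
    Matrix (Fin dA × Fin dC) (Fin dA × Fin dC) ℂ :=
  fun p q => ∑ b : Fin dB, ρ (p.1, b, p.2) (q.1, b, q.2)

/-- Von Neumann entropy of a Hermitian matrix: `S(ρ) = −∑ᵢ λᵢ log λᵢ`. -/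
noncomputable def vnEntropy {m : Type*} [Fintype m] [DecidableEq m]
    {ρ : Matrix m m ℂ} (h : ρ.IsHermitian) : ℝ :=
  ∑ i, Real.negMulLog (h.eigenvalues i)

section MyAux
open Polynomial

lemma my_reverse_inj {R : Type*} [Semiring R] {p q : R[X]}
    (hdeg : p.natDegree = q.natDegree) (h : p.reverse = q.reverse) : p = q := by
  ext k
  have hp : p.coeff k = p.reverse.coeff (revAt p.natDegree k) := by
    rw [Polynomial.coeff_reverse, revAt_invol]
  have hq : q.coeff k = q.reverse.coeff (revAt q.natDegree k) := by
    rw [Polynomial.coeff_reverse, revAt_invol]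
  rw [hp, hq, hdeg, h]

lemma my_charmatrix_diagonal {n : Type*} [Fintype n] [DecidableEq n] (d : n → ℂ) :
    charmatrix (Matrix.diagonal d) = Matrix.diagonal (fun i => (X : ℂ[X]) - C (d i)) := by
  ext i j
  by_cases h : i = j
  · subst h; simp
  · rw [charmatrix_apply_ne _ _ _ h, Matrix.diagonal_apply_ne _ h,
      Matrix.diagonal_apply_ne _ h, map_zero, neg_zero]

lemma my_charpoly_unitary_conj {n : Type*} [Fintype n] [DecidableEq n]
    (U : Matrix.unitaryGroup n ℂ) (D : Matrix n n ℂ) :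
    ((U : Matrix n n ℂ) * D * star (U : Matrix n n ℂ)).charpoly = D.charpoly := by
  set Um : Matrix n n ℂ[X] := ((U : Matrix n n ℂ)).map (C : ℂ →+* ℂ[X]) with hUm
  set V : Matrix n n ℂ[X] := (star (U : Matrix n n ℂ)).map (C : ℂ →+* ℂ[X]) with hV
  have hUV : Um * V = 1 := by
    rw [hUm, hV, ← Matrix.map_mul, (Matrix.mem_unitaryGroup_iff).mp U.2, Matrix.map_one C
      (map_zero _) (map_one _)]
  have key : charmatrix ((U : Matrix n n ℂ) * D * star (U : Matrix n n ℂ))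
      = Um * charmatrix D * V := by
    rw [charmatrix, charmatrix, Matrix.mul_sub, Matrix.sub_mul]
    congr 1
    · rw [← (Matrix.scalar_commute (X : ℂ[X]) (fun r => Commute.all _ _) Um).eq, Matrix.mul_assoc,
        hUV, Matrix.mul_one]
    · simp only [RingHom.mapMatrix_apply, Matrix.map_mul]
      rfl
  rw [Matrix.charpoly, Matrix.charpoly, key, Matrix.det_mul, Matrix.det_mul]
  rw [mul_comm (Matrix.det Um), mul_assoc, ← Matrix.det_mul, hUV, Matrix.det_one, mul_one]

lemma my_herm_charpoly {n : Type*} [Fintype n] [DecidableEq n]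
    {A : Matrix n n ℂ} (hA : A.IsHermitian) :
    A.charpoly = ∏ i, ((X : ℂ[X]) - C (hA.eigenvalues i : ℂ)) := by
  conv_lhs => rw [hA.spectral_theorem]
  rw [Unitary.conjStarAlgAut_apply, my_charpoly_unitary_conj, Matrix.charpoly, my_charmatrix_diagonal, Matrix.det_diagonal]
  rfl

lemma my_herm_roots {n : Type*} [Fintype n] [DecidableEq n]
    {A : Matrix n n ℂ} (hA : A.IsHermitian) :
    A.charpoly.roots = Finset.univ.val.map (fun i => (hA.eigenvalues i : ℂ)) := by
  rw [my_herm_charpoly hA]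
  rw [← Polynomial.roots_multiset_prod_X_sub_C (Finset.univ.val.map (fun i => (hA.eigenvalues i : ℂ)))]
  congr 1
  rw [Multiset.map_map, Finset.prod_eq_multiset_prod]
  rfl

lemma my_charpoly_transpose {n : Type*} [Fintype n] [DecidableEq n] (A : Matrix n n ℂ) :
    Aᵀ.charpoly = A.charpoly := by
  rw [Matrix.charpoly, Matrix.charpoly, ← Matrix.det_transpose (charmatrix A)]
  congr 1
  ext i j
  by_cases h : i = j
  · subst h; simp
  · simp [Matrix.transpose_apply, charmatrix_apply_ne _ _ _ h,
      charmatrix_apply_ne _ _ _ (Ne.symm h)]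

lemma my_WA {m n : Type*} [Fintype m] [DecidableEq m] [Fintype n] [DecidableEq n]
    (M : Matrix m n ℂ) :
    (M * Mᴴ).charpoly * X ^ (Fintype.card n) = (Mᴴ * M).charpoly * X ^ (Fintype.card m) := by
  have h1 : (M * Mᴴ).charpolyRev = (Mᴴ * M).charpolyRev := by
    rw [Matrix.charpolyRev, Matrix.charpolyRev, Matrix.map_mul, Matrix.map_mul,
      ← Matrix.smul_mul, Matrix.det_one_sub_mul_comm, Matrix.mul_smul]
  apply my_reverse_inj
  · rw [Polynomial.natDegree_mul (Matrix.charpoly_monic _).ne_zero (pow_ne_zero _ X_ne_zero),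
      Polynomial.natDegree_mul (Matrix.charpoly_monic _).ne_zero (pow_ne_zero _ X_ne_zero),
      Matrix.charpoly_natDegree_eq_dim, Matrix.charpoly_natDegree_eq_dim,
      Polynomial.natDegree_X_pow, Polynomial.natDegree_X_pow, add_comm]
  · rw [Polynomial.reverse_mul_X_pow, Polynomial.reverse_mul_X_pow,
      Matrix.reverse_charpoly, Matrix.reverse_charpoly, h1]

lemma my_sum_eq {m n : Type*} [Fintype m] [DecidableEq m] [Fintype n] [DecidableEq n]
    {A : Matrix m m ℂ} {B : Matrix n n ℂ} (hA : A.IsHermitian) (hB : B.IsHermitian)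
    (h : A.charpoly * X ^ (Fintype.card n) = B.charpoly * X ^ (Fintype.card m)) :
    ∑ i, Real.negMulLog (hA.eigenvalues i) = ∑ j, Real.negMulLog (hB.eigenvalues j) := by
  have hroots := congrArg Polynomial.roots h
  rw [Polynomial.roots_mul (mul_ne_zero (Matrix.charpoly_monic _).ne_zero (pow_ne_zero _ X_ne_zero)),
    Polynomial.roots_mul (mul_ne_zero (Matrix.charpoly_monic _).ne_zero (pow_ne_zero _ X_ne_zero)),
    Polynomial.roots_X_pow, Polynomial.roots_X_pow, my_herm_roots hA, my_herm_roots hB] at hroots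
  have hsum := congrArg (fun s : Multiset ℂ => (s.map (fun z : ℂ => Real.negMulLog z.re)).sum) hroots
  simp only [Multiset.map_add, Multiset.sum_add, Multiset.map_nsmul, Multiset.map_singleton,
    Complex.zero_re, Real.negMulLog_zero, Multiset.nsmul_singleton, Multiset.map_replicate, Multiset.sum_replicate,
    smul_zero, add_zero, Multiset.map_map, Function.comp_def, Complex.ofReal_re] at hsum
  rw [Finset.sum_eq_multiset_sum, Finset.sum_eq_multiset_sum]
  exact hsum

end MyAux

section FinalProof

variable {dA dB dC : ℕ}

open Polynomial in
private lemma entropy_key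
    (ψ : Fin dA × Fin dB × Fin dC → ℂ)
    (hB : (redB (vecMulVec ψ (star ψ))).IsHermitian)
    (hC : (redC (vecMulVec ψ (star ψ))).IsHermitian)
    (hAB : (redAB (vecMulVec ψ (star ψ))).IsHermitian)
    (hAC : (redAC (vecMulVec ψ (star ψ))).IsHermitian) :
    vnEntropy hAB = vnEntropy hC ∧ vnEntropy hAC = vnEntropy hB := by
  classical
  set M1 : Matrix (Fin dA × Fin dB) (Fin dC) ℂ := fun p c => ψ (p.1, p.2, c) with hM1
  set M2 : Matrix (Fin dA × Fin dC) (Fin dB) ℂ := fun p b => ψ (p.1, b, p.2) with hM2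
  have hABeq : redAB (vecMulVec ψ (star ψ)) = M1 * M1ᴴ := by
    ext p q
    simp only [Matrix.mul_apply, Matrix.conjTranspose_apply]
    simp [redAB, Matrix.mul_apply, Matrix.vecMulVec_apply, Matrix.conjTranspose_apply, hM1]
  have hCeq : redC (vecMulVec ψ (star ψ)) = (M1ᴴ * M1)ᵀ := by
    ext c c'
    simp only [Matrix.transpose_apply, Matrix.mul_apply, Matrix.conjTranspose_apply]
    simp [redC, Matrix.mul_apply, Matrix.vecMulVec_apply, Matrix.conjTranspose_apply,
      Matrix.transpose_apply, Fintype.sum_prod_type, hM1, mul_comm]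
  have hACeq : redAC (vecMulVec ψ (star ψ)) = M2 * M2ᴴ := by
    ext p q
    simp only [Matrix.mul_apply, Matrix.conjTranspose_apply]
    simp [redAC, Matrix.mul_apply, Matrix.vecMulVec_apply, Matrix.conjTranspose_apply, hM2]
  have hBeq : redB (vecMulVec ψ (star ψ)) = (M2ᴴ * M2)ᵀ := by
    ext b b'
    simp only [Matrix.transpose_apply, Matrix.mul_apply, Matrix.conjTranspose_apply]
    simp [redB, Matrix.mul_apply, Matrix.vecMulVec_apply, Matrix.conjTranspose_apply,
      Matrix.transpose_apply, Fintype.sum_prod_type, hM2, mul_comm]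
  constructor
  · have := my_sum_eq hAB hC (by
      rw [hABeq, hCeq, my_charpoly_transpose]
      exact my_WA M1)
    simpa [vnEntropy] using this
  · have := my_sum_eq hAC hB (by
      rw [hACeq, hBeq, my_charpoly_transpose]
      exact my_WA M2)
    simpa [vnEntropy] using this

end FinalProof

/-- Entropic monogamy for pure tripartite states `ρ = ψψ⋆`:
`I(A:B) + I(A:C) ≤ 2 S(ρ_A)`, where `I(A:X) = S(ρ_A) + S(ρ_X) − S(ρ_{AX})`. -/
theorem mutual_information_monogamy
    (ψ : Fin dA × Fin dB × Fin dC → ℂ) (hψ : star ψ ⬝ᵥ ψ = 1)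
    (hA : (redA (vecMulVec ψ (star ψ))).IsHermitian)
    (hB : (redB (vecMulVec ψ (star ψ))).IsHermitian)
    (hC : (redC (vecMulVec ψ (star ψ))).IsHermitian)
    (hAB : (redAB (vecMulVec ψ (star ψ))).IsHermitian)
    (hAC : (redAC (vecMulVec ψ (star ψ))).IsHermitian) :
    (vnEntropy hA + vnEntropy hB - vnEntropy hAB) +
      (vnEntropy hA + vnEntropy hC - vnEntropy hAC) ≤ 2 * vnEntropy hA := by
  obtain ⟨e1, e2⟩ := entropy_key ψ hB hC hAB hAC
  linarith
end
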